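/- For p ∈ [0,1], K ≥ 1, F > 0, and F'(j) = p^j(1-p)^{K-j}F, the function j ↦ δ_IA(j) with δ_IA(j) = C(K-1,j) K F'(j) / max{K_T K/(K_T+K-j), j+1} satisfies δ_IA(j) ≤ C(K-1,j) p^j (1-p)^{K-j} K F / (j+1), and therefore Σ_{j=0}^{K-1} δ_IA(j) ≤ (F/p)·(1-p)·(1 - (1-p)^K) when p > 0. -/

import Mathlib

/-- `δ_IA(j) ≤ C(K-1,j) p^j (1-p)^{K-j} K F/(j+1)`, and consequently
`∑_j δ_IA(j) ≤ (F/p)(1-p)(1-(1-p)^K)` when `p > 0`. -/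
theorem ia_ndt_bound (KT K : ℕ) (hKT : 1 ≤ KT) (hK : 1 ≤ K) (p : ℝ) (hp0 : 0 ≤ p)
    (hp1 : p ≤ 1) (F : ℝ) (hF : 0 < F) (F' : ℕ → ℝ)
    (hF' : ∀ j, F' j = p ^ j * (1 - p) ^ (K - j) * F) (δIA : ℕ → ℝ)
    (hδIA : ∀ j, δIA j = (Nat.choose (K - 1) j : ℝ) * K * F' j /
      max ((KT : ℝ) * K / ((KT : ℝ) + K - j)) ((j : ℝ) + 1)) :
    (∀ j : ℕ, j ≤ K - 1 →
      δIA j ≤ (Nat.choose (K - 1) j : ℝ) * p ^ j * (1 - p) ^ (K - j) * K * F / (j + 1)) ∧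
    (0 < p → ∑ j ∈ Finset.range K, δIA j ≤ F / p * (1 - p) * (1 - (1 - p) ^ K)) := by
  have h1p : 0 ≤ 1 - p := by linarith
  have key : ∀ j : ℕ, δIA j ≤
      (Nat.choose (K - 1) j : ℝ) * p ^ j * (1 - p) ^ (K - j) * K * F / (j + 1) := by
    intro j
    rw [hδIA, hF']
    have hN : 0 ≤ (Nat.choose (K - 1) j : ℝ) * K * (p ^ j * (1 - p) ^ (K - j) * F) := by
      positivity
    have hj1 : (0:ℝ) < (j:ℝ) + 1 := by positivity
    have hle : ((j:ℝ) + 1) ≤ max ((KT : ℝ) * K / ((KT : ℝ) + K - j)) ((j : ℝ) + 1) :=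
      le_max_right _ _
    calc (Nat.choose (K - 1) j : ℝ) * K * (p ^ j * (1 - p) ^ (K - j) * F) /
          max ((KT : ℝ) * K / ((KT : ℝ) + K - j)) ((j : ℝ) + 1)
        ≤ (Nat.choose (K - 1) j : ℝ) * K * (p ^ j * (1 - p) ^ (K - j) * F) / ((j:ℝ) + 1) :=
          div_le_div_of_nonneg_left hN hj1 hle
      _ = (Nat.choose (K - 1) j : ℝ) * p ^ j * (1 - p) ^ (K - j) * K * F / (j + 1) := by
          ring
  refine ⟨fun j _ => key j, fun hp => ?_⟩
  have hbin : ∑ i ∈ Finset.range (K + 1),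
      p ^ i * (1 - p) ^ (K - i) * (Nat.choose K i : ℝ) = 1 := by
    have := add_pow p (1 - p) K
    simp at this
    linarith [this.symm]
  have hS : ∑ j ∈ Finset.range K,
      p ^ (j + 1) * (1 - p) ^ (K - (j + 1)) * (Nat.choose K (j + 1) : ℝ)
      = 1 - (1 - p) ^ K := by
    have h0 := Finset.sum_range_succ' (fun i => p ^ i * (1 - p) ^ (K - i) * (Nat.choose K i : ℝ)) K
    rw [hbin] at h0
    simp at h0
    linarith
  have hterm : ∀ j ∈ Finset.range K,
      (Nat.choose (K - 1) j : ℝ) * p ^ j * (1 - p) ^ (K - j) * K * F / (j + 1)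
      = F / p * (1 - p) * (p ^ (j + 1) * (1 - p) ^ (K - (j + 1)) * (Nat.choose K (j + 1) : ℝ)) := by
    intro j hj
    rw [Finset.mem_range] at hj
    have hc : (K : ℝ) * (Nat.choose (K - 1) j : ℝ) = (Nat.choose K (j + 1) : ℝ) * ((j:ℝ) + 1) := by
      have h := Nat.add_one_mul_choose_eq (K - 1) j
      simp only [Nat.succ_eq_add_one, Nat.sub_add_cancel hK] at h
      exact_mod_cast congrArg (Nat.cast : ℕ → ℝ) h
    have hpow : (1 - p) ^ (K - j) = (1 - p) * (1 - p) ^ (K - (j + 1)) := by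
      rw [← pow_succ']
      congr 1
      omega
    have hj1 : ((j:ℝ) + 1) ≠ 0 := by positivity
    have hpne : p ≠ 0 := ne_of_gt hp
    rw [hpow]
    have hp' : F / p * p ^ (j + 1) = F * p ^ j := by
      rw [pow_succ, div_mul_eq_mul_div, mul_div_assoc, mul_div_cancel_right₀ _ hpne]
    rw [div_eq_iff hj1]
    linear_combination ((1 - p) * (1 - p) ^ (K - (j + 1)) * F * p ^ j) * hc
      - ((1 - p) * (1 - p) ^ (K - (j + 1)) * (Nat.choose K (j + 1) : ℝ) * ((j:ℝ) + 1)) * hp'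
  calc ∑ j ∈ Finset.range K, δIA j
      ≤ ∑ j ∈ Finset.range K,
        (Nat.choose (K - 1) j : ℝ) * p ^ j * (1 - p) ^ (K - j) * K * F / (j + 1) :=
        Finset.sum_le_sum fun j _ => key j
    _ = ∑ j ∈ Finset.range K,
        F / p * (1 - p) * (p ^ (j + 1) * (1 - p) ^ (K - (j + 1)) * (Nat.choose K (j + 1) : ℝ)) :=
        Finset.sum_congr rfl hterm
    _ = F / p * (1 - p) * (1 - (1 - p) ^ K) := by
        rw [← Finset.mul_sum, hS]
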